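/- For every positive integer n there exist real weights w_{i,j} (1 ≤ i,j ≤ n) and thresholds θ_i such that Φ_n(x)_i = 1 if and only if Σ_{j=1}^n w_{i,j} x_j ≥ θ_i, for all x ∈ {0,1}^n and all i; i.e., each coordinate of Φ_n is a linear threshold function. -/

import Mathlib

/-- The prefix `(x₁,…,x_m)` (1-indexed) of `x ∈ {0,1}ⁿ` is alternating:
consecutive entries differ. -/
def AltPrefix (n : ℕ) (x : Fin n → Bool) (m : ℕ) : Prop :=
  ∀ j : ℕ, j + 1 < m → ∀ hn : j + 1 < n,
    x ⟨j, Nat.lt_of_succ_lt hn⟩ ≠ x ⟨j + 1, hn⟩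

instance (n : ℕ) (x : Fin n → Bool) : DecidablePred (AltPrefix n x) := fun m =>
  decidable_of_iff
    (∀ j ∈ Finset.range n, j + 1 < m → ∀ hn : j + 1 < n,
      x ⟨j, Nat.lt_of_succ_lt hn⟩ ≠ x ⟨j + 1, hn⟩)
    (by
      constructor
      · intro h j hj hn
        exact h j (Finset.mem_range.mpr (Nat.lt_of_succ_lt hn)) hj hn
      · intro h j _ hj hn
        exact h j hj hn)

/-- The largest `m ≤ n` such that the prefix `(x₁,…,x_m)` is alternating. -/
def mIdx (n : ℕ) (x : Fin n → Bool) : ℕ :=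
  Nat.findGreatest (AltPrefix n x) n

/-- The map `Φₙ : {0,1}ⁿ → {0,1}ⁿ`: with `m` the largest index such that
`(x₁,…,x_m)` is alternating, `yᵢ = 1 - x_m` for `i ≤ m` and `yᵢ = xᵢ` for `i > m`. -/
def Phi (n : ℕ) (x : Fin n → Bool) : Fin n → Bool :=
  fun i =>
    if _h : (i : ℕ) < mIdx n x then
      ! x ⟨mIdx n x - 1, by
        have h2 : mIdx n x ≤ n := Nat.findGreatest_le n
        omega⟩
    else x i

/-- The alternating vector `(…,1,0,1,0)`: `x_j = 1` iff `j ≢ n (mod 2)` (1-indexed). -/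
def altEnd0 (n : ℕ) : Fin n → Bool := fun i => decide (((i : ℕ) + 1) % 2 ≠ n % 2)

/-- The alternating vector `(…,0,1,0,1)`: `x_j = 1` iff `j ≡ n (mod 2)` (1-indexed). -/
def altEnd1 (n : ℕ) : Fin n → Bool := fun i => decide (((i : ℕ) + 1) % 2 = n % 2)

/-- The bit `c_j` (0-indexed `j`): XOR of consecutive bits `x_j, x_{j+1}`,
and for the last position the bit itself. -/
def cbit (n : ℕ) (x : Fin n → Bool) (j : Fin n) : Bool :=
  if h : (j : ℕ) + 1 < n then xor (x j) (x ⟨(j : ℕ) + 1, h⟩) else x j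

/-- The map `rₙ(x) = Σ_{j=1}^n c_j 2^{j-1}`. -/
def rmap (n : ℕ) (x : Fin n → Bool) : ℕ :=
  ∑ j : Fin n, (if cbit n x j then 1 else 0) * 2 ^ (j : ℕ)

/-- The recursively defined weights `w_{n,i,j}` (all indices 1-based; values for
indices outside `1 ≤ i, j ≤ n` are irrelevant junk). -/
def wgt : ℕ → ℕ → ℕ → ℤ
  | 0, _, _ => 0
  | 1, _, _ => -1
  | (n+2), i, j =>
    if i = n + 2 then
      (if j = n + 2 then (n : ℤ)
       else if j % 2 = (n + 2) % 2 then -1 else 1)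
    else if i = n + 1 then
      (if j = n + 2 then -1
       else if j = n + 1 then wgt (n+1) (n+1) j + 1
       else wgt (n+1) (n+1) j)
    else
      (if j = n + 2 then -1
       else if j = n + 1 then wgt (n+1) i j
       else wgt (n+1) i j + wgt n i j)

/-- The recursively defined thresholds `θ_{n,i}`. -/
def thr : ℕ → ℕ → ℤ
  | 0, _ => 0
  | 1, _ => 0
  | (n+2), i =>
    if i = n + 2 then (((n + 2) / 2 : ℕ) : ℤ)
    else if i = n + 1 then thr (n+1) (n+1)
    else thr (n+1) i + thr n i - 1


-- ===================== auxiliary development =====================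

open Finset


def P0z (m : ℕ) : ℤ := ∑ r ∈ Finset.range m, if r % 2 = 1 then 2^(m-1-r) else 0
def P1z (m : ℕ) : ℤ := ∑ r ∈ Finset.range m, if r % 2 = 0 then 2^(m-1-r) else 0
def vz (m r : ℕ) : ℤ :=
  (if r = 0 then 2^m - 2*P1z m + 2*P0z m else 2^(m-r)) + (if r = m-1 then 1 else 0)
def DETz (m : ℕ) (z : ℕ → Bool) : ℤ := ∑ r ∈ Finset.range m, if z r then vz m r else 0

lemma geomZ (m : ℕ) : ∑ r ∈ Finset.range m, (2:ℤ)^r = 2^m - 1 := by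
  induction m with
  | zero => simp
  | succ k ih => rw [Finset.sum_range_succ, ih]; ring

lemma P0_add_P1 (m : ℕ) : P0z m + P1z m = 2^m - 1 := by
  rw [P0z, P1z, ← Finset.sum_add_distrib]
  have h1 : ∀ r ∈ Finset.range m,
      ((if r % 2 = 1 then (2:ℤ)^(m-1-r) else 0) + (if r % 2 = 0 then 2^(m-1-r) else 0))
      = 2^(m-1-r) := by
    intro r _
    rcases Nat.mod_two_eq_zero_or_one r with h | h <;> simp [h]
  rw [Finset.sum_congr rfl h1]
  rw [← geomZ m]
  rw [← Finset.sum_range_reflect]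
  apply Finset.sum_congr rfl
  intro r hr
  simp only [Finset.mem_range] at hr
  congr 1
  omega

lemma P0_nonneg (m : ℕ) : 0 ≤ P0z m := by
  apply Finset.sum_nonneg; intro r _; positivity

lemma P1_nonneg (m : ℕ) : 0 ≤ P1z m := by
  apply Finset.sum_nonneg; intro r _; positivity

lemma P0_le (m : ℕ) : P0z m ≤ 2^m - 1 := by
  have := P0_add_P1 m; have := P1_nonneg m; omega

lemma P1_le (m : ℕ) : P1z m ≤ 2^m - 1 := by
  have := P0_add_P1 m; have := P0_nonneg m; omega

lemma sum_vz (m : ℕ) (hm : 1 ≤ m) : ∑ r ∈ Finset.range m, vz m r = 4 * P0z m + 1 := by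
  unfold vz
  rw [Finset.sum_add_distrib]
  have h2 : ∑ r ∈ Finset.range m, (if r = m-1 then (1:ℤ) else 0) = 1 := by
    rw [Finset.sum_ite_eq' (Finset.range m) (m-1) (fun _ => (1:ℤ))]
    simp; omega
  rw [h2]
  obtain ⟨k, rfl⟩ : ∃ k, m = k + 1 := ⟨m - 1, by omega⟩
  rw [Finset.sum_range_succ']
  have h3 : ∀ r ∈ Finset.range k,
      (if r + 1 = 0 then (2:ℤ)^(k+1) - 2*P1z (k+1) + 2*P0z (k+1) else 2^(k+1-(r+1))) = 2^(k-r) := by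
    intro r hr; simp
  rw [Finset.sum_congr rfl h3]
  have h4 : ∑ r ∈ Finset.range k, (2:ℤ)^(k-r) = 2^(k+1) - 2 := by
    rw [← Finset.sum_range_reflect]
    have : ∀ r ∈ Finset.range k, (2:ℤ)^(k-(k-1-r)) = 2*2^r := by
      intro r hr; simp only [Finset.mem_range] at hr
      rw [show k - (k-1-r) = r+1 by omega]; ring
    rw [Finset.sum_congr rfl this, ← Finset.mul_sum, geomZ]; ring
  rw [h4]
  have h5 := P0_add_P1 (k+1)
  norm_num
  linarith

lemma DET_p0 (m : ℕ) (hm : 1 ≤ m) :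
    DETz m (fun r => decide (r % 2 = 1)) = 2 * P0z m + (if (m-1) % 2 = 1 then 1 else 0) := by
  unfold DETz
  have h1 : ∀ r ∈ Finset.range m,
      (if (decide (r % 2 = 1) : Bool) then vz m r else 0)
      = 2 * (if r % 2 = 1 then (2:ℤ)^(m-1-r) else 0)
        + (if r = m-1 then (if r % 2 = 1 then (1:ℤ) else 0) else 0) := by
    intro r hr
    simp only [Finset.mem_range] at hr
    rcases Nat.mod_two_eq_zero_or_one r with h | h
    · simp [h]
    · have hr0 : r ≠ 0 := by omega
      simp only [h, decide_eq_true_eq, if_pos rfl, vz, if_neg hr0]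
      rw [show m - r = (m-1-r) + 1 by omega]
      ring_nf
      rcases eq_or_ne r (m-1) with h2 | h2 <;> simp [h2] <;> ring
  rw [Finset.sum_congr rfl h1, Finset.sum_add_distrib, ← Finset.mul_sum]
  rw [Finset.sum_ite_eq' (Finset.range m) (m-1)]
  rw [if_pos (by simp; omega)]
  rfl

lemma DET_compl (m : ℕ) (p : ℕ → Bool) :
    DETz m (fun r => !(p r)) = (∑ r ∈ Finset.range m, vz m r) - DETz m p := by
  unfold DETz
  rw [← Finset.sum_sub_distrib]
  apply Finset.sum_congr rfl
  intro r _
  cases h : p r <;> simp [h]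

lemma DET_pattern (m : ℕ) (hm : 1 ≤ m) (b : Bool) :
    DETz m (fun r => xor b (decide (r % 2 = 1)))
      = 2 * P0z m + (if xor b (decide ((m-1) % 2 = 1)) then 1 else 0) := by
  cases b
  · simpa using DET_p0 m hm
  · have : (fun r => xor true (decide (r % 2 = 1))) = fun r => !(decide (r % 2 = 1)) := by
      funext r; simp
    rw [this, DET_compl, sum_vz m hm, DET_p0 m hm]
    rcases Nat.mod_two_eq_zero_or_one (m-1) with h | h <;> simp [h] <;> ring

lemma vz_nonneg (m r : ℕ) (hr : 1 ≤ r) : 0 ≤ vz m r := by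
  unfold vz
  rw [if_neg (by omega)]
  have : (0:ℤ) ≤ 2^(m-r) := by positivity
  split <;> omega

lemma vz_ge (m r : ℕ) (hr : 1 ≤ r) : (2:ℤ)^(m-r) ≤ vz m r := by
  unfold vz
  rw [if_neg (by omega)]
  split <;> omega

lemma vz_abs_le (m r : ℕ) : |vz m r| ≤ 2^(m+3) := by
  have h2 : (2:ℤ)^(m-r) ≤ 2^m := pow_le_pow_right₀ (by norm_num) (by omega)
  have h2' : (0:ℤ) < 2^(m-r) := by positivity
  have h3 : (0:ℤ) ≤ P0z m := P0_nonneg m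
  have h4 : (0:ℤ) ≤ P1z m := P1_nonneg m
  have h5 := P0_le m
  have h6 := P1_le m
  have hm3 : (2:ℤ)^(m+3) = 8 * 2^m := by ring
  unfold vz
  rw [abs_le]
  constructor <;> (split <;> split <;> (try omega))
  all_goals simp_all; omega

lemma sum_desc (k : ℕ) : ∑ r ∈ Finset.range k, (2:ℤ)^(k-r) = 2^(k+1) - 2 := by
  rw [← Finset.sum_range_reflect]
  have : ∀ r ∈ Finset.range k, (2:ℤ)^(k-(k-1-r)) = 2*2^r := by
    intro r hr; simp only [Finset.mem_range] at hr
    rw [show k - (k-1-r) = r+1 by omega]; ring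
  rw [Finset.sum_congr rfl this, ← Finset.mul_sum, geomZ]; ring

lemma tail_le (m t : ℕ) (ht : 1 ≤ t) (htm : t < m) :
    ∑ s ∈ Finset.Ico (t+1) m, vz m s ≤ vz m t - 1 := by
  unfold vz
  rw [Finset.sum_add_distrib]
  have h1 : ∀ s ∈ Finset.Ico (t+1) m,
      (if s = 0 then (2:ℤ)^m - 2*P1z m + 2*P0z m else 2^(m-s)) = 2^(m-s) := by
    intro s hs; simp only [Finset.mem_Ico] at hs; rw [if_neg (by omega)]
  rw [Finset.sum_congr rfl h1]
  have h2 : ∑ s ∈ Finset.Ico (t+1) m, (2:ℤ)^(m-s) = 2^(m-t) - 2 := by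
    rw [Finset.sum_Ico_eq_sum_range]
    have : ∀ j ∈ Finset.range (m - (t+1)), (2:ℤ)^(m-(t+1+j)) = 2^((m-t-1) - j) := by
      intro j hj; simp only [Finset.mem_range] at hj; congr 1; omega
    rw [show m - (t+1) = m - t - 1 from by omega, Finset.sum_congr rfl (by
      intro j hj; simp only [Finset.mem_range] at hj
      rw [show m - (t+1+j) = (m-t-1) - j from by omega] : ∀ j ∈ Finset.range (m-t-1), (2:ℤ)^(m-(t+1+j)) = 2^((m-t-1)-j)), sum_desc]
    rw [show m - t - 1 + 1 = m - t from by omega]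
  rw [h2]
  have h3 : ∑ s ∈ Finset.Ico (t+1) m, (if s = m-1 then (1:ℤ) else 0) ≤ 1 := by
    rw [Finset.sum_ite_eq' (Finset.Ico (t+1) m) (m-1) (fun _ => (1:ℤ))]
    split <;> norm_num
  rw [if_neg (by omega)]
  omega

lemma detBound (m : ℕ) (hm : 1 ≤ m) (z : ℕ → Bool) :
    |2 * P0z m - DETz m z| ≤ 2^(2*m+4) := by
  have h1 : |DETz m z| ≤ (m:ℤ) * 2^(m+3) := by
    calc |DETz m z| ≤ ∑ r ∈ Finset.range m, |if z r then vz m r else 0| :=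
          abs_sum_le_sum_abs _ _
      _ ≤ ∑ r ∈ Finset.range m, (2:ℤ)^(m+3) := by
          apply Finset.sum_le_sum
          intro r _
          cases z r
          · simp only [Bool.false_eq_true, if_false, abs_zero]; positivity
          · simpa using vz_abs_le m r
      _ = (m:ℤ) * 2^(m+3) := by rw [Finset.sum_const, Finset.card_range]; ring
  have hmlt : (m:ℤ) ≤ 2^m := by exact_mod_cast (Nat.lt_two_pow_self (n := m)).le
  have h2 : (m:ℤ) * 2^(m+3) ≤ 2^(2*m+3) := by
    calc (m:ℤ) * 2^(m+3) ≤ 2^m * 2^(m+3) := by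
          apply mul_le_mul_of_nonneg_right hmlt (by positivity)
      _ = 2^(2*m+3) := by rw [← pow_add]; congr 1; omega
  have h3 : (0:ℤ) ≤ P0z m := P0_nonneg m
  have h4 : P0z m ≤ 2^m - 1 := P0_le m
  have h5 : (2:ℤ)^(m+1) ≤ 2^(2*m+3) := pow_le_pow_right₀ (by norm_num) (by omega)
  have h6 : (2:ℤ)^(2*m+4) = 2^(2*m+3) + 2^(2*m+3) := by ring
  have h7 : (2:ℤ)^(m+1) = 2*2^m := by ring
  have := abs_le.mp h1
  rw [abs_le]
  omega

lemma baseLemma (m : ℕ) (hm : 1 ≤ m) (z : ℕ → Bool) (k : ℕ) (hk : k < m)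
    (halt : ∀ r, r + 1 ≤ k → z r ≠ z (r+1))
    (hend : k + 1 < m → z k = z (k+1)) :
    (z k = false ↔ DETz m z ≤ 2 * P0z m) := by
  set q : ℕ → Bool := fun r => xor (z 0) (decide (r % 2 = 1)) with hq
  have hqr : ∀ r, q (r+1) = !(q r) := by
    intro r
    simp only [hq]
    rcases Nat.mod_two_eq_zero_or_one r with h | h <;>
      · have h2 : (r+1) % 2 = 1 - r % 2 := by omega
        cases z 0 <;> simp [h, h2]
  have hzq : ∀ r, r ≤ k → z r = q r := by
    intro r
    induction r with
    | zero => intro _; simp [hq]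
    | succ s ih =>
      intro hs
      have h1 : z s ≠ z (s+1) := halt s hs
      have h2 : z (s+1) = !(z s) := by
        cases hzs : z s <;> cases hzs1 : z (s+1) <;> simp_all
      rw [h2, ih (by omega), hqr s]
  have hDq : DETz m q = 2 * P0z m + (if q (m-1) then 1 else 0) := by
    rw [hq]; exact DET_pattern m hm (z 0)
  by_cases hkm : k + 1 < m
  · have hz1 : z (k+1) = q k := by rw [← hend hkm, hzq k le_rfl]
    have hq1 : q (k+1) = !(q k) := hqr k
    have hsplit : DETz m z - DETz m q
        = ∑ r ∈ Finset.Ico (k+1) m, ((if z r then vz m r else 0) - (if q r then vz m r else 0)) := by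
      unfold DETz
      rw [← Finset.sum_range_add_sum_Ico (fun r => if z r then vz m r else 0) (show k+1 ≤ m by omega),
          ← Finset.sum_range_add_sum_Ico (fun r => if q r then vz m r else 0) (show k+1 ≤ m by omega)]
      have hpre : ∑ r ∈ Finset.range (k+1), (if z r then vz m r else 0)
          = ∑ r ∈ Finset.range (k+1), (if q r then vz m r else 0) := by
        apply Finset.sum_congr rfl
        intro r hr
        simp only [Finset.mem_range] at hr
        rw [hzq r (by omega)]
      rw [hpre, Finset.sum_sub_distrib]
      ring
    have hbot : ∑ r ∈ Finset.Ico (k+1) m, ((if z r then vz m r else 0) - (if q r then vz m r else 0))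
        = ((if z (k+1) then vz m (k+1) else 0) - (if q (k+1) then vz m (k+1) else 0))
          + ∑ r ∈ Finset.Ico (k+2) m, ((if z r then vz m r else 0) - (if q r then vz m r else 0)) := by
      exact Finset.sum_eq_sum_Ico_succ_bot hkm _
    have htail : |∑ r ∈ Finset.Ico (k+2) m, ((if z r then vz m r else 0) - (if q r then vz m r else 0))|
        ≤ vz m (k+1) - 1 := by
      calc |∑ r ∈ Finset.Ico (k+2) m, ((if z r then vz m r else 0) - (if q r then vz m r else 0))|
          ≤ ∑ r ∈ Finset.Ico (k+2) m, |(if z r then vz m r else 0) - (if q r then vz m r else 0)| :=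
            abs_sum_le_sum_abs _ _
        _ ≤ ∑ r ∈ Finset.Ico (k+2) m, vz m r := by
            apply Finset.sum_le_sum
            intro r hr
            simp only [Finset.mem_Ico] at hr
            have h0 : 0 ≤ vz m r := vz_nonneg m r (by omega)
            rw [abs_le]
            constructor <;> (cases z r <;> cases q r <;> simp <;> omega)
        _ ≤ vz m (k+1) - 1 := tail_le m (k+1) (by omega) (by omega)
    have habs := abs_le.mp htail
    cases hqk : q k
    · have hzk : z k = false := by rw [hzq k le_rfl, hqk]
      have hzk1 : z (k+1) = false := by rw [hz1, hqk]
      have hqk1 : q (k+1) = true := by rw [hq1, hqk]; rfl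
      have : DETz m z ≤ 2 * P0z m := by
        have hiq : (if q (m-1) then (1:ℤ) else 0) ≤ 1 := by split <;> norm_num
        have e1 : (if z (k+1) then vz m (k+1) else 0) - (if q (k+1) then vz m (k+1) else 0)
            = -vz m (k+1) := by rw [hzk1, hqk1]; simp
        omega
      simp [hzk, this]
    · have hzk : z k = true := by rw [hzq k le_rfl, hqk]
      have hzk1 : z (k+1) = true := by rw [hz1, hqk]
      have hqk1 : q (k+1) = false := by rw [hq1, hqk]; rfl
      have : ¬ (DETz m z ≤ 2 * P0z m) := by
        have hiq : (0:ℤ) ≤ (if q (m-1) then (1:ℤ) else 0) := by split <;> norm_num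
        have e1 : (if z (k+1) then vz m (k+1) else 0) - (if q (k+1) then vz m (k+1) else 0)
            = vz m (k+1) := by rw [hzk1, hqk1]; simp
        omega
      simp [hzk, this]
  · have hkm' : k = m - 1 := by omega
    have hDz : DETz m z = DETz m q := by
      unfold DETz
      apply Finset.sum_congr rfl
      intro r hr
      simp only [Finset.mem_range] at hr
      rw [hzq r (by omega)]
    have hqmk : q (m-1) = z k := by rw [hzq k le_rfl, hkm']
    rw [hDz, hDq, hqmk]
    have h3 : (0:ℤ) ≤ P0z m := P0_nonneg m
    cases hzk : z k <;> simp [hzk]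


lemma altPrefix_one (n : ℕ) (x : Fin n → Bool) : AltPrefix n x 1 := by
  intro j hj _; omega

lemma mIdx_pos (n : ℕ) (hn : 0 < n) (x : Fin n → Bool) : 1 ≤ mIdx n x :=
  Nat.le_findGreatest hn (altPrefix_one n x)

lemma mIdx_le' (n : ℕ) (x : Fin n → Bool) : mIdx n x ≤ n := Nat.findGreatest_le n

lemma mIdx_alt (n : ℕ) (hn : 0 < n) (x : Fin n → Bool) : AltPrefix n x (mIdx n x) :=
  Nat.findGreatest_spec (m := 1) hn (altPrefix_one n x)

lemma mIdx_boundary (n : ℕ) (hn : 0 < n) (x : Fin n → Bool) (h : mIdx n x < n)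
    (h1 : mIdx n x - 1 < n) (h2 : mIdx n x < n) :
    x ⟨mIdx n x - 1, h1⟩ = x ⟨mIdx n x, h2⟩ := by
  have hpos := mIdx_pos n hn x
  have hng : ¬ AltPrefix n x (mIdx n x + 1) :=
    Nat.findGreatest_is_greatest (Nat.lt_succ_self (mIdx n x)) (by omega)
  unfold AltPrefix at hng
  push_neg at hng
  obtain ⟨j, hj1, hjn, hj2⟩ := hng
  have halt := mIdx_alt n hn x
  have hj3 : j + 1 = mIdx n x := by
    by_contra hne
    exact halt j (by omega) hjn hj2
  have hjeq : j = mIdx n x - 1 := by omega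
  subst hjeq
  convert hj2 using 3
  omega

lemma teleSum (a : ℝ) (f : ℕ → ℝ) (I : ℕ) :
    ∑ t ∈ Finset.range I, (a * (-1)^t) * (f t - f (t+1))
      = (∑ j ∈ Finset.range I, (if j = 0 then a else 2*a*(-1)^j) * f j)
        + (if I = 0 then 0 else a * (-1)^I * f I) := by
  induction I with
  | zero => simp
  | succ J ih =>
    rw [Finset.sum_range_succ, ih,
        Finset.sum_range_succ (f := fun j => (if j = 0 then a else 2*a*(-1)^j) * f j)]
    rcases Nat.eq_zero_or_pos J with rfl | hJ
    · simp; ring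
    · rw [if_neg (by omega), if_neg (by omega), if_neg (by omega)]
      ring

noncomputable def wN (n i j : ℕ) : ℝ :=
  if i = 0 then -((vz n j : ℤ) : ℝ)
  else
    if j < i then
      (if j = 0 then ((-1:ℝ)^(i+1) * (1/(2*i)))
       else 2 * ((-1:ℝ)^(i+1) * (1/(2*i))) * (-1)^j)
    else if j = i then
      ((-1:ℝ)^(i+1) * (1/(2*i))) * (-1)^i + 1
        - ((1/(2*(i:ℝ)))/2^(2*(n-i)+5)) * ((vz (n-i) 0 : ℤ) : ℝ)
    else -((1/(2*(i:ℝ)))/2^(2*(n-i)+5)) * ((vz (n-i) (j-i) : ℤ) : ℝ)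

noncomputable def thN (n i : ℕ) : ℝ :=
  if i = 0 then -(((2 * P0z n : ℤ)) : ℝ)
  else 1/2 - ((1/(2*(i:ℝ)))/2^(2*(n-i)+5)) * (((2 * P0z (n-i) : ℤ)) : ℝ)

lemma detSplit (m : ℕ) (hm : 1 ≤ m) (z : ℕ → Bool) :
    DETz m z = (if z 0 then vz m 0 else 0)
      + ∑ r ∈ Finset.range (m-1), (if z (r+1) then vz m (r+1) else 0) := by
  obtain ⟨k, rfl⟩ : ∃ k, m = k+1 := ⟨m-1, by omega⟩
  rw [DETz, Finset.sum_range_succ']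
  simp [add_comm]

set_option maxHeartbeats 2000000

/-- Every coordinate of `Φₙ` is a linear threshold function: there are real
weights `w_{i,j}` and thresholds `θᵢ` with `Φₙ(x)ᵢ = 1 ↔ Σⱼ w_{i,j} xⱼ ≥ θᵢ`. -/
theorem Phi_is_threshold_network (n : ℕ) (hn : 0 < n) :
    ∃ (w : Fin n → Fin n → ℝ) (θ : Fin n → ℝ),
      ∀ x : Fin n → Bool, ∀ i : Fin n,
        (Phi n x i = true ↔ θ i ≤ ∑ j : Fin n, w i j * (if x j then 1 else 0)) := by
  refine ⟨fun i j => wN n i j, fun i => thN n i, ?_⟩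
  intro x i
  show Phi n x i = true ↔ thN n (i:ℕ) ≤ ∑ j : Fin n, wN n (i:ℕ) (j:ℕ) * (if x j then 1 else 0)
  set M := mIdx n x with hMdef
  have hM1 : 1 ≤ M := mIdx_pos n hn x
  have hMn : M ≤ n := mIdx_le' n x
  set xb : ℕ → Bool := fun j => if h : j < n then x ⟨j, h⟩ else false with hxb
  have hxbe : ∀ (j : ℕ) (h : j < n), xb j = x ⟨j, h⟩ := by
    intro j h; simp only [hxb]; rw [dif_pos h]
  set b : ℕ → ℝ := fun j => if xb j then 1 else 0 with hb
  have hb01 : ∀ j, b j = 0 ∨ b j = 1 := by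
    intro j; simp only [hb]; cases xb j <;> simp
  have halt' : ∀ t, t + 1 < M → xb t ≠ xb (t+1) := by
    intro t ht
    have htn : t + 1 < n := by omega
    rw [hxbe t (by omega), hxbe (t+1) htn]
    exact mIdx_alt n hn x t ht htn
  have hbd : M < n → xb (M-1) = xb M := by
    intro h
    rw [hxbe (M-1) (by omega), hxbe M h]
    exact mIdx_boundary n hn x h (by omega) h
  have hsum0 : ∑ j : Fin n, wN n (i:ℕ) (j:ℕ) * (if x j then 1 else 0)
      = ∑ j ∈ Finset.range n, wN n (i:ℕ) j * b j := by
    rw [← Fin.sum_univ_eq_sum_range (fun j => wN n (i:ℕ) j * b j) n]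
    apply Finset.sum_congr rfl
    intro j _
    congr 1
    simp only [hb]
    rw [hxbe (j:ℕ) j.isLt]
  have hPhi : Phi n x i = (if (i:ℕ) < M then !xb (M-1) else xb (i:ℕ)) := by
    rw [Phi]
    split_ifs with h
    · congr 1
      rw [hxbe (M-1) (by omega)]
    · rw [hxbe (i:ℕ) i.isLt]
  by_cases hI0 : (i : ℕ) = 0
  · -- coordinate 0
    have hθ : thN n (i:ℕ) = -(((2 * P0z n : ℤ)) : ℝ) := by rw [hI0, thN, if_pos rfl]
    have hw : ∀ j ∈ Finset.range n, wN n (i:ℕ) j * b j = -(((vz n j : ℤ):ℝ) * b j) := by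
      intro j _; rw [hI0, wN, if_pos rfl]; ring
    have hdet : ((DETz n xb : ℤ) : ℝ) = ∑ j ∈ Finset.range n, ((vz n j : ℤ):ℝ) * b j := by
      rw [DETz]; push_cast
      apply Finset.sum_congr rfl
      intro j _
      simp only [hb]
      cases h : xb j <;> simp [h]
    have hbase := baseLemma n hn xb (M-1) (by omega)
      (fun r hr => halt' r (by omega))
      (fun h => by rw [show M - 1 + 1 = M by omega]; exact hbd (by omega))
    rw [hsum0, Finset.sum_congr rfl hw, Finset.sum_neg_distrib, ← hdet, hθ, hPhi,
        if_pos (by omega : (i:ℕ) < M)]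
    rw [neg_le_neg_iff]
    rw [show ((DETz n xb : ℤ):ℝ) ≤ ((2 * P0z n : ℤ):ℝ) ↔ DETz n xb ≤ 2 * P0z n from Int.cast_le]
    rw [← hbase]
    cases xb (M-1) <;> simp
  · -- coordinate ≥ 1
    have hIpos : 1 ≤ (i:ℕ) := by omega
    have hIn : (i:ℕ) < n := i.isLt
    set I := (i : ℕ) with hI
    set m := n - I with hm
    have hm1 : 1 ≤ m := by omega
    set a : ℝ := (-1:ℝ)^(I+1) * (1/(2*(I:ℝ))) with ha
    set lam : ℝ := (1/(2*(I:ℝ)))/2^(2*m+5) with hlam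
    have hIne : ((I:ℝ)) ≠ 0 := Nat.cast_ne_zero.mpr (by omega)
    have hIR : (1:ℝ) ≤ (I:ℝ) := by exact_mod_cast hIpos
    have heps_pos : (0:ℝ) < 1/(2*(I:ℝ)) := by positivity
    have hlam_pos : 0 < lam := by rw [hlam]; positivity
    set zb : ℕ → Bool := fun r => xb (I + r) with hzb
    have hθval : thN n I = 1/2 - lam * (((2 * P0z m : ℤ)) : ℝ) := by
      rw [thN, if_neg hI0, ← hm, ← hlam]
    have hwlt : ∀ j, j < I → wN n I j = (if j = 0 then a else 2*a*(-1)^j) := by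
      intro j hj
      rw [wN, if_neg hI0, if_pos hj, ← ha]
    have hwI : wN n I I = a * (-1)^I + 1 - lam * ((vz m 0 : ℤ):ℝ) := by
      rw [wN, if_neg hI0, if_neg (by omega), if_pos rfl, ← ha, ← hm, ← hlam]
    have hwgt : ∀ j, I < j → j < n → wN n I j = -(lam * ((vz m (j - I) : ℤ):ℝ)) := by
      intro j hj _
      rw [wN, if_neg hI0, if_neg (by omega), if_neg (by omega), ← hm, ← hlam]
      ring
    have key : ∑ j ∈ Finset.range n, wN n I j * b j
        = (∑ t ∈ Finset.range I, (a * (-1)^t) * (b t - b (t+1))) + b I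
          - lam * ((DETz m zb : ℤ):ℝ) := by
      rw [← Finset.sum_range_add_sum_Ico _ (show I+1 ≤ n by omega)]
      rw [Finset.sum_range_succ]
      have piece1 : ∑ j ∈ Finset.range I, wN n I j * b j
          = (∑ t ∈ Finset.range I, (a * (-1)^t) * (b t - b (t+1))) - a * (-1)^I * b I := by
        have ht := teleSum a b I
        rw [if_neg (by omega)] at ht
        rw [Finset.sum_congr rfl (fun j hj => by
          rw [hwlt j (Finset.mem_range.mp hj)])]
        linarith only [ht]
      have piece3 : ∑ j ∈ Finset.Ico (I+1) n, wN n I j * b j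
          = -(lam * (∑ r ∈ Finset.range (m-1), ((vz m (r+1) : ℤ):ℝ) * b (I+1+r))) := by
        rw [Finset.sum_Ico_eq_sum_range]
        rw [show n - (I+1) = m - 1 by omega]
        rw [Finset.mul_sum, ← Finset.sum_neg_distrib]
        apply Finset.sum_congr rfl
        intro r hr
        simp only [Finset.mem_range] at hr
        rw [hwgt (I+1+r) (by omega) (by omega), show I+1+r-I = r+1 by omega]
        ring
      have hdetm : ((DETz m zb : ℤ):ℝ)
          = ((vz m 0:ℤ):ℝ) * b I
            + ∑ r ∈ Finset.range (m-1), ((vz m (r+1) : ℤ):ℝ) * b (I+1+r) := by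
        have hds := detSplit m hm1 zb
        have hcast : ((DETz m zb : ℤ):ℝ)
            = ((if zb 0 then vz m 0 else 0 : ℤ):ℝ)
              + ((∑ r ∈ Finset.range (m-1), if zb (r+1) then vz m (r+1) else 0 : ℤ):ℝ) := by
          rw [hds]; push_cast; ring
        rw [hcast]
        congr 1
        · have hzb0 : zb 0 = xb I := by simp only [hzb]; congr 1
          simp only [hb, hzb0]
          cases h : xb I <;> simp [h]
        · push_cast
          apply Finset.sum_congr rfl
          intro r _
          have hzbr : zb (r+1) = xb (I+1+r) := by
            simp only [hzb]; congr 1; omega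
          simp only [hb, hzbr]
          cases h : xb (I+1+r) <;> simp [h]
      rw [piece1, hwI, piece3, hdetm]
      ring
    by_cases hiM : I < M
    · -- case A : alternating prefix through I
      have hpat : ∀ t, t ≤ I → xb t = xor (xb 0) (decide (t % 2 = 1)) := by
        intro t
        induction t with
        | zero => intro _; simp
        | succ s ih =>
          intro hs
          have h1 : xb s ≠ xb (s+1) := halt' s (by omega)
          have h2 : xb (s+1) = !(xb s) := by
            revert h1; cases xb s <;> cases xb (s+1) <;> simp
          rw [h2, ih (by omega)]
          have h3 : (s+1) % 2 = 1 - s % 2 := by omega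
          rcases Nat.mod_two_eq_zero_or_one s with h | h <;>
            cases xb 0 <;> simp [h, h3]
      have hQterm : ∀ t, t < I → (a * (-1)^t) * (b t - b (t+1)) = a * (2 * b 0 - 1) := by
        intro t ht
        have e1 := hpat t (by omega)
        have e2 := hpat (t+1) (by omega)
        have h3 : (t+1) % 2 = 1 - t % 2 := by omega
        rcases Nat.mod_two_eq_zero_or_one t with h | h
        · have hp : (-1:ℝ)^t = 1 := Even.neg_one_pow (Nat.even_iff.mpr h)
          cases h0 : xb 0 <;>
            simp only [hb, e1, e2, h, h3, h0, hp] <;> norm_num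
        · have hp : (-1:ℝ)^t = -1 := Odd.neg_one_pow (Nat.odd_iff.mpr h)
          cases h0 : xb 0 <;>
            simp only [hb, e1, e2, h, h3, h0, hp] <;> norm_num
      have hQ : ∑ t ∈ Finset.range I, (a * (-1)^t) * (b t - b (t+1))
          = (I:ℝ) * (a * (2*b 0 - 1)) := by
        rw [Finset.sum_congr rfl (fun t ht => hQterm t (Finset.mem_range.mp ht))]
        rw [Finset.sum_const, Finset.card_range, nsmul_eq_mul]
      have hIhalf : (I:ℝ) * (1/(2*(I:ℝ))) = 1/2 := by field_simp
      have hhalf : (I:ℝ) * (a * (2*b 0 - 1)) + b I = 1/2 := by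
        have hxbI := hpat I le_rfl
        rcases Nat.mod_two_eq_zero_or_one I with h | h
        · have hp : (-1:ℝ)^(I+1) = -1 := Odd.neg_one_pow (by rw [Nat.odd_iff]; omega)
          have hdec : (decide (I % 2 = 1)) = false := by simp [h]
          rw [hdec] at hxbI
          cases h0 : xb 0
          · have hb0 : b 0 = 0 := by simp [hb, h0]
            have hxv : xb I = false := by rw [hxbI, h0]; rfl
            have hbIv : b I = 0 := by simp [hb, hxv]
            rw [hb0, hbIv, ha, hp]
            linear_combination hIhalf
          · have hb0 : b 0 = 1 := by simp [hb, h0]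
            have hxv : xb I = true := by rw [hxbI, h0]; rfl
            have hbIv : b I = 1 := by simp [hb, hxv]
            rw [hb0, hbIv, ha, hp]
            linear_combination -hIhalf
        · have hp : (-1:ℝ)^(I+1) = 1 := Even.neg_one_pow (by rw [Nat.even_iff]; omega)
          have hdec : (decide (I % 2 = 1)) = true := by simp [h]
          rw [hdec] at hxbI
          cases h0 : xb 0
          · have hb0 : b 0 = 0 := by simp [hb, h0]
            have hxv : xb I = true := by rw [hxbI, h0]; rfl
            have hbIv : b I = 1 := by simp [hb, hxv]
            rw [hb0, hbIv, ha, hp]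
            linear_combination -hIhalf
          · have hb0 : b 0 = 1 := by simp [hb, h0]
            have hxv : xb I = false := by rw [hxbI, h0]; rfl
            have hbIv : b I = 0 := by simp [hb, hxv]
            rw [hb0, hbIv, ha, hp]
            linear_combination hIhalf
      have hSval : ∑ j ∈ Finset.range n, wN n I j * b j
          = 1/2 - lam * ((DETz m zb:ℤ):ℝ) := by
        rw [key, hQ]; linarith only [hhalf]
      have hbase := baseLemma m hm1 zb (M-1-I) (by omega)
        (fun r hr => by
          have : xb (I+r) ≠ xb (I+r+1) := halt' (I+r) (by omega)
          simpa [hzb, add_assoc] using this)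
        (fun hke => by
          have hMln : M < n := by omega
          have e1 : I + (M-1-I) = M-1 := by omega
          have e2 : I + (M-1-I+1) = M := by omega
          show xb (I + (M-1-I)) = xb (I + (M-1-I+1))
          rw [e1, e2]; exact hbd hMln)
      have hzk : zb (M-1-I) = xb (M-1) := by
        show xb (I + (M-1-I)) = xb (M-1)
        rw [show I + (M-1-I) = M-1 by omega]
      rw [hsum0, hSval, hθval, hPhi, if_pos hiM]
      rw [hzk] at hbase
      cases hxbM : xb (M-1)
      · simp only [Bool.not_false, true_iff]
        have hDle : DETz m zb ≤ 2 * P0z m := hbase.mp hxbM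
        have hDler : ((DETz m zb:ℤ):ℝ) ≤ ((2*P0z m:ℤ):ℝ) := Int.cast_le.mpr hDle
        linarith only [mul_le_mul_of_nonneg_left hDler hlam_pos.le]
      · simp only [Bool.not_true, Bool.false_eq_true, false_iff, not_le]
        have hDgt : ¬ (DETz m zb ≤ 2 * P0z m) := by
          intro hcon
          have := hbase.mpr hcon
          simp [hxbM] at this
        have hDgt2 : (2*P0z m) < DETz m zb := by omega
        have hDgtr : ((2*P0z m:ℤ):ℝ) < ((DETz m zb:ℤ):ℝ) := Int.cast_lt.mpr hDgt2
        linarith only [mul_lt_mul_of_pos_left hDgtr hlam_pos]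
    · -- case B : broken prefix, output x i
      have hMI : M ≤ I := by omega
      have hMln : M < n := by omega
      have hbM : b (M-1) - b M = 0 := by
        simp only [hb, hbd hMln]; ring
      have habs_term : ∀ t, |(a*(-1)^t)*(b t - b (t+1))| ≤ 1/(2*(I:ℝ)) := by
        intro t
        have h1 : |a*(-1)^t| = 1/(2*(I:ℝ)) := by
          rw [abs_mul, ha, abs_mul, abs_pow, abs_pow, abs_neg, abs_one, one_pow,
              one_pow, mul_one, one_mul, abs_of_pos heps_pos]
        have h2 : |b t - b (t+1)| ≤ 1 := by
          rcases hb01 t with h|h <;> rcases hb01 (t+1) with h'|h' <;>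
            rw [h, h'] <;> norm_num
        calc |(a*(-1)^t)*(b t - b (t+1))| = |a*(-1)^t| * |b t - b (t+1)| := abs_mul _ _
          _ ≤ (1/(2*(I:ℝ))) * 1 := by
              rw [h1]
              exact mul_le_mul_of_nonneg_left h2 heps_pos.le
          _ = 1/(2*(I:ℝ)) := mul_one _
      have hQb : |∑ t ∈ Finset.range I, (a*(-1)^t)*(b t - b (t+1))|
          ≤ ((I:ℝ)-1) * (1/(2*(I:ℝ))) := by
        have hmem : M-1 ∈ Finset.range I := by
          simp only [Finset.mem_range]; omega
        have hterm0 : |(a*(-1)^(M-1))*(b (M-1) - b (M-1+1))| = 0 := by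
          rw [show M-1+1 = M by omega, abs_eq_zero, hbM]
          ring
        have h2 : ∑ t ∈ (Finset.range I).erase (M-1), |(a*(-1)^t)*(b t - b (t+1))|
            ≤ ((I:ℝ)-1) * (1/(2*(I:ℝ))) := by
          calc ∑ t ∈ (Finset.range I).erase (M-1), |(a*(-1)^t)*(b t - b (t+1))|
              ≤ ∑ _t ∈ (Finset.range I).erase (M-1), 1/(2*(I:ℝ)) :=
                Finset.sum_le_sum (fun t _ => habs_term t)
            _ = ((I:ℝ)-1) * (1/(2*(I:ℝ))) := by
                rw [Finset.sum_const, Finset.card_erase_of_mem hmem, Finset.card_range,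
                    nsmul_eq_mul]
                congr 1
                push_cast [Nat.cast_sub hIpos]
                ring
        calc |∑ t ∈ Finset.range I, (a*(-1)^t)*(b t - b (t+1))|
            ≤ ∑ t ∈ Finset.range I, |(a*(-1)^t)*(b t - b (t+1))| :=
              Finset.abs_sum_le_sum_abs _ _
          _ = |(a*(-1)^(M-1))*(b (M-1) - b (M-1+1))|
              + ∑ t ∈ (Finset.range I).erase (M-1), |(a*(-1)^t)*(b t - b (t+1))| :=
              (Finset.add_sum_erase _ (fun t => |(a*(-1)^t)*(b t - b (t+1))|) hmem).symm
          _ ≤ ((I:ℝ)-1) * (1/(2*(I:ℝ))) := by rw [hterm0, zero_add]; exact h2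
      have hDb : lam * |((2*P0z m:ℤ):ℝ) - ((DETz m zb:ℤ):ℝ)| ≤ (1/(2*(I:ℝ)))/2 := by
        have h1 := detBound m hm1 zb
        have h1' : |((2*P0z m:ℤ):ℝ) - ((DETz m zb:ℤ):ℝ)| ≤ 2^(2*m+4) := by
          have : (((2 * P0z m - DETz m zb):ℤ):ℝ) = ((2*P0z m:ℤ):ℝ) - ((DETz m zb:ℤ):ℝ) := by
            push_cast; ring
          rw [← this, ← Int.cast_abs]
          exact_mod_cast h1
        calc lam * |((2*P0z m:ℤ):ℝ) - ((DETz m zb:ℤ):ℝ)| ≤ lam * 2^(2*m+4) :=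
              mul_le_mul_of_nonneg_left h1' hlam_pos.le
          _ = (1/(2*(I:ℝ)))/2 := by
              rw [hlam]
              rw [show (2:ℝ)^(2*m+5) = 2^(2*m+4) * 2 by ring]
              field_simp
        
      have hQle := abs_le.mp hQb
      have hDabs : |lam * (((2*P0z m:ℤ):ℝ) - ((DETz m zb:ℤ):ℝ))| ≤ (1/(2*(I:ℝ)))/2 := by
        rw [abs_mul, abs_of_pos hlam_pos]; exact hDb
      have hDle2 := abs_le.mp hDabs
      have hIε : ((I:ℝ)-1) * (1/(2*(I:ℝ))) = 1/2 - 1/(2*(I:ℝ)) := by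
        field_simp
        try ring
      rw [hIε] at hQle
      rw [hsum0, key, hθval, hPhi, if_neg hiM]
      cases hbI : xb I
      · have hbIr : b I = 0 := by simp [hb, hbI]
        simp only [Bool.false_eq_true, false_iff, not_le]
        rw [hbIr]
        linarith only [hQle.1, hQle.2, hDle2.1, hDle2.2, heps_pos]
      · have hbIr : b I = 1 := by simp [hb, hbI]
        simp only [true_iff]
        rw [hbIr]
        linarith only [hQle.1, hQle.2, hDle2.1, hDle2.2, heps_pos]
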